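/- Let f : ℝᵐ → ℝ be convex and differentiable, let A : ℝᵐ → ℝˢ be a linear map with adjoint Aᵀ, and let b ∈ ℝˢ. Define H : ℝᵐ × ℝˢ → ℝᵐ × ℝˢ by H(w, M) := (∇f(w) + Aᵀ M, b − A w). Then H is monotone on all of ℝᵐ × ℝˢ: for all (w, M) and (w', M'), ⟨H(w, M) − H(w', M'), (w, M) − (w', M')⟩ ≥ 0. -/

import Mathlib

open scoped InnerProductSpace

lemma grad_mono_aux {m : ℕ} (f : EuclideanSpace ℝ (Fin m) → ℝ)
    (hfc : ConvexOn ℝ Set.univ f) (hfd : Differentiable ℝ f)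
    (w w' : EuclideanSpace ℝ (Fin m)) :
    0 ≤ ⟪gradient f w - gradient f w', w - w'⟫_ℝ := by
  set v := w - w' with hv
  set g : ℝ → ℝ := fun t => f (w' + t • v) with hg
  have hline : ∀ t : ℝ, HasDerivAt (fun t : ℝ => w' + t • v) v t := by
    intro t
    simpa using ((hasDerivAt_id t).smul_const v).const_add w'
  have hgd : ∀ t : ℝ, HasDerivAt g ⟪gradient f (w' + t • v), v⟫_ℝ t := by
    intro t
    have h1 : HasGradientAt f (gradient f (w' + t • v)) (w' + t • v) :=
      (hfd _).hasGradientAt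
    have h2 := (hasGradientAt_iff_hasFDerivAt.mp h1).comp_hasDerivAt t (hline t)
    simpa [InnerProductSpace.toDual_apply_apply, Function.comp_def, hg] using h2
  have hgc : ConvexOn ℝ Set.univ g := by
    have : g = f ∘ (AffineMap.lineMap w' (w' + v) : ℝ → EuclideanSpace ℝ (Fin m)) := by
      funext t
      simp [hg, AffineMap.lineMap_apply, add_sub_cancel_left, add_comm]
    rw [this]
    have := hfc.comp_affineMap (AffineMap.lineMap w' (w' + v))
    simpa using this
  have key : ⟪gradient f w', v⟫_ℝ ≤ ⟪gradient f w, v⟫_ℝ := by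
    rcases eq_or_ne w w' with h | h
    · simp [h, hv]
    have h01 : (0 : ℝ) < 1 := one_pos
    have hle := hgc.le_slope_of_hasDerivAt (Set.mem_univ 0) (Set.mem_univ 1) h01 (hgd 0)
    have hge := hgc.slope_le_of_hasDerivAt (Set.mem_univ 0) (Set.mem_univ 1) h01 (hgd 1)
    have h0 : w' + (0 : ℝ) • v = w' := by simp
    have h1 : w' + (1 : ℝ) • v = w := by simp [hv]
    calc ⟪gradient f w', v⟫_ℝ = ⟪gradient f (w' + (0:ℝ) • v), v⟫_ℝ := by rw [h0]
      _ ≤ slope g 0 1 := hle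
      _ ≤ ⟪gradient f (w' + (1:ℝ) • v), v⟫_ℝ := hge
      _ = ⟪gradient f w, v⟫_ℝ := by rw [h1]
  have : ⟪gradient f w - gradient f w', v⟫_ℝ =
      ⟪gradient f w, v⟫_ℝ - ⟪gradient f w', v⟫_ℝ := by
    rw [inner_sub_left]
  linarith [key, this.ge]

/-- The KKT map `H(w, M) := (∇f(w) + Aᵀ M, b − A w)` of a smooth convex program with
affine constraints is monotone on the whole product space: for all `(w, M)` and
`(w', M')`, `⟪H(w,M) − H(w',M'), (w,M) − (w',M')⟫ ≥ 0`, where the inner product on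
the product is the sum of the componentwise inner products. -/
theorem stmt_8 {m s : ℕ} (f : EuclideanSpace ℝ (Fin m) → ℝ)
    (hfc : ConvexOn ℝ Set.univ f) (hfd : Differentiable ℝ f)
    (A : EuclideanSpace ℝ (Fin m) →L[ℝ] EuclideanSpace ℝ (Fin s))
    (b : EuclideanSpace ℝ (Fin s)) :
    ∀ (w w' : EuclideanSpace ℝ (Fin m)) (M M' : EuclideanSpace ℝ (Fin s)),
      0 ≤ ⟪(gradient f w + (ContinuousLinearMap.adjoint A) M) -
            (gradient f w' + (ContinuousLinearMap.adjoint A) M'), w - w'⟫_ℝ +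
          ⟪(b - A w) - (b - A w'), M - M'⟫_ℝ := by
  intro w w' M M'
  have hgrad := grad_mono_aux f hfc hfd w w'
  have e1 : (gradient f w + (ContinuousLinearMap.adjoint A) M) -
      (gradient f w' + (ContinuousLinearMap.adjoint A) M') =
      (gradient f w - gradient f w') + (ContinuousLinearMap.adjoint A) (M - M') := by
    rw [map_sub]; abel
  have e2 : (b - A w) - (b - A w') = -(A (w - w')) := by
    rw [map_sub]; abel
  rw [e1, e2, inner_add_left, inner_neg_left,
    ContinuousLinearMap.adjoint_inner_left]
  rw [real_inner_comm (A (w - w')) (M - M'), real_inner_comm (w - w') (gradient f w - gradient f w')] at *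
  linarith
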